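/- With G and F as in the context: (a) F is continuous on ℝ; (b) F belongs to L², i.e. MemLp F 2 with respect to the volume measure on ℝ; and (c) there exists a real number L such that ∫_{−R}^{R} ‖F(x)‖² dx → L as R → ∞ (the limit of the interval integrals of the continuous function ‖F‖² exists, i.e. ‖F‖² is improperly Riemann integrable on ℝ). -/

import Mathlib

open MeasureTheory Filter Topology Real

section PlancherelAux

open Set FourierTransform AddCircle
open scoped ENNReal NNReal

private lemma coeff_eq_aux (S : Set ℝ) (hSm : MeasurableSet S) (hsub : S ⊆ Set.Ioc 0 1)
    (t : ℝ) (n : ℤ) :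
    haveI : Fact ((0:ℝ) < 1) := ⟨one_pos⟩
    fourierCoeff (AddCircle.liftIoc 1 0
      (fun ξ : ℝ => (Real.fourierChar (ξ * t) : ℂ) * S.indicator (fun _ => (1:ℂ)) ξ)) n
      = ∫ v in S, (Real.fourierChar (v * (t - n)) : ℂ) := by
  haveI : Fact ((0:ℝ) < 1) := ⟨one_pos⟩
  rw [fourierCoeff_liftIoc_eq, fourierCoeffOn_eq_integral]
  have h1 : ((0:ℝ) + 1 - 0) = 1 := by norm_num
  rw [intervalIntegral.integral_of_le (by norm_num : (0:ℝ) ≤ 0 + 1)]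
  have key : ∀ x : ℝ, x ∈ Set.Ioc (0:ℝ) (0+1) →
      (fourier (-n) (x : AddCircle ((0:ℝ) + 1 - 0)) : ℂ) •
      ((Real.fourierChar (x * t) : ℂ) * S.indicator (fun _ => (1:ℂ)) x)
      = S.indicator (fun v => (Real.fourierChar (v * (t - n)) : ℂ)) x := by
    intro x _
    by_cases hx : x ∈ S
    · simp only [Set.indicator_of_mem hx, mul_one, smul_eq_mul]
      rw [fourier_coe_apply, Real.fourierChar_apply, Real.fourierChar_apply, ← Complex.exp_add]
      rw [h1]
      congr 1
      push_cast
      ring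
    · simp [Set.indicator_of_notMem hx]
  rw [setIntegral_congr_fun measurableSet_Ioc key]
  rw [setIntegral_indicator hSm]
  have h2 : Set.Ioc (0:ℝ) (0+1) ∩ S = S := by
    rw [Set.inter_eq_right]
    simpa using hsub
  rw [h2]
  norm_num

private lemma parseval_piece (S : Set ℝ) (hSm : MeasurableSet S) (hsub : S ⊆ Set.Ioc 0 1)
    (t : ℝ) :
    HasSum (fun n : ℤ => ‖∫ v in S, (Real.fourierChar (v * (t - n)) : ℂ)‖ ^ 2)
      ((volume S).toReal) := by
  haveI : Fact ((0:ℝ) < 1) := ⟨one_pos⟩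
  set g : ℝ → ℂ := fun ξ => (Real.fourierChar (ξ * t) : ℂ) * S.indicator (fun _ => (1:ℂ)) ξ
    with hgdef
  have hgc : Continuous fun ξ : ℝ => (Real.fourierChar (ξ * t) : ℂ) :=
    continuous_subtype_val.comp
      (Real.continuous_fourierChar.comp (continuous_id.mul continuous_const))
  have hgm : Measurable g := hgc.measurable.mul (measurable_const.indicator hSm)
  have hgb : ∀ ξ, ‖g ξ‖ ≤ 1 := by
    intro ξ
    rw [hgdef]
    simp only [norm_mul, Circle.norm_coe, one_mul]
    classical
    by_cases hξ : ξ ∈ S <;>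
      simp [Set.indicator_of_mem, Set.indicator_of_notMem, hξ]
  set φ : AddCircle 1 → ℂ := AddCircle.liftIoc 1 0 g with hφdef
  have hφm : Measurable φ := by
    have : φ = (g ∘ Subtype.val) ∘ (AddCircle.measurableEquivIoc 1 0) := rfl
    rw [this]
    exact (hgm.comp measurable_subtype_coe).comp (AddCircle.measurableEquivIoc 1 0).measurable
  have hφb : ∀ z, ‖φ z‖ ≤ 1 := fun z => hgb _
  have hmem : MemLp φ 2 haarAddCircle :=
    MemLp.of_bound hφm.aestronglyMeasurable 1 (Filter.Eventually.of_forall hφb)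
  set fL2 : Lp ℂ 2 (@haarAddCircle 1 _) := hmem.toLp φ with hfL2
  have hcoeffφ : ∀ n : ℤ, fourierCoeff (⇑fL2) n = fourierCoeff φ n := by
    intro n
    unfold fourierCoeff
    apply integral_congr_ae
    filter_upwards [hmem.coeFn_toLp] with z hz
    rw [hz]
  have hparseval := tsum_sq_fourierCoeff fL2
  have hsummable : Summable (fun i : ℤ => ‖fourierCoeff (⇑fL2) i‖ ^ 2) := by
    have h := (lp.memℓp (fourierBasis.repr fL2)).summable
      (by norm_num : 0 < (2:ℝ≥0∞).toReal)
    simp only [ENNReal.toReal_ofNat, Real.rpow_two] at h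
    simp only [fourierBasis_repr] at h
    exact h
  have hR : ∫ z : AddCircle 1, ‖fL2 z‖ ^ 2 ∂haarAddCircle = (volume S).toReal := by
    have e1 : ∫ z : AddCircle 1, ‖fL2 z‖ ^ 2 ∂haarAddCircle
        = ∫ z : AddCircle 1, ‖φ z‖ ^ 2 ∂haarAddCircle := by
      apply integral_congr_ae
      filter_upwards [hmem.coeFn_toLp] with z hz
      rw [hz]
    have e2 : (volume : Measure (AddCircle (1:ℝ))) = haarAddCircle := by
      rw [AddCircle.volume_eq_smul_haarAddCircle]
      simp
    rw [e1, ← e2, ← AddCircle.integral_preimage 1 0 (fun z : AddCircle 1 => ‖φ z‖ ^ 2)]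
    have e3 : ∀ a ∈ Set.Ioc (0:ℝ) (0+1), ‖φ (a : AddCircle (1:ℝ))‖ ^ 2
        = S.indicator (fun _ => (1:ℝ)) a := by
      intro a ha
      rw [hφdef, AddCircle.liftIoc_coe_apply ha, hgdef]
      classical
      by_cases haS : a ∈ S <;>
        simp [Set.indicator_of_mem, Set.indicator_of_notMem, haS, norm_mul,
          Circle.norm_coe]
    rw [setIntegral_congr_fun measurableSet_Ioc e3, setIntegral_indicator hSm]
    have e4 : Set.Ioc (0:ℝ) (0+1) ∩ S = S := by
      rw [Set.inter_eq_right]; simpa using hsub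
    rw [e4]
    simp [Measure.restrict_apply_univ, measureReal_def]
  have hcoeff2 : ∀ n : ℤ, fourierCoeff (⇑fL2) n
      = ∫ v in S, (Real.fourierChar (v * (t - n)) : ℂ) := by
    intro n
    rw [hcoeffφ n, hφdef, hgdef]
    exact coeff_eq_aux S hSm hsub t n
  have := hsummable.hasSum
  rw [hparseval, hR] at this
  simpa only [hcoeff2] using this

private lemma integrable_sq_lemma (S : Set ℝ) (hSm : MeasurableSet S) (hsub : S ⊆ Set.Ioc 0 1)
    (F : ℝ → ℂ) (hFc : Continuous F)
    (hFeq : ∀ w : ℝ, F w = ∫ v in S, (Real.fourierChar (v * w) : ℂ)) :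
    Integrable (fun x => ‖F x‖ ^ 2) volume := by
  set M : ℝ := (volume S).toReal with hM
  have hsum : ∀ t : ℝ, HasSum (fun n : ℤ => ‖F (t + n)‖ ^ 2) M := by
    intro t
    have h := parseval_piece S hSm hsub t
    have h' : HasSum (fun n : ℤ => ‖F (t - n)‖ ^ 2) M := by
      convert h using 2 with n
      rw [hFeq]
    have h2 := ((Equiv.neg ℤ).hasSum_iff).2 h'
    convert h2 using 2 with n
    simp [Function.comp, sub_neg_eq_add]
  have hFm : Measurable fun x : ℝ => ENNReal.ofReal (‖F x‖ ^ 2) :=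
    ((hFc.norm.pow 2).measurable).ennreal_ofReal
  have hlint : ∫⁻ x, ENNReal.ofReal (‖F x‖ ^ 2) = ENNReal.ofReal M := by
    have hcover : (⋃ n : ℤ, Set.Ioc ((n : ℝ)) ((n : ℝ) + 1)) = Set.univ :=
      iUnion_Ioc_intCast (α := ℝ)
    calc ∫⁻ x, ENNReal.ofReal (‖F x‖ ^ 2)
        = ∫⁻ x in ⋃ n : ℤ, Set.Ioc ((n : ℝ)) ((n : ℝ) + 1), ENNReal.ofReal (‖F x‖ ^ 2) := by
          rw [hcover, Measure.restrict_univ]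
      _ = ∑' n : ℤ, ∫⁻ x in Set.Ioc ((n : ℝ)) ((n : ℝ) + 1), ENNReal.ofReal (‖F x‖ ^ 2) :=
          lintegral_iUnion (fun n => measurableSet_Ioc) (pairwise_disjoint_Ioc_intCast ℝ) _
      _ = ∑' n : ℤ, ∫⁻ y in Set.Ioc (0 : ℝ) 1, ENNReal.ofReal (‖F (y + n)‖ ^ 2) := by
          congr 1
          funext n
          have hemb : MeasurableEmbedding (fun x : ℝ => x + (n : ℝ)) :=
            (Homeomorph.addRight (n : ℝ)).measurableEmbedding
          have hmp : MeasurePreserving (fun x : ℝ => x + (n : ℝ)) volume volume :=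
            measurePreserving_add_right volume (n : ℝ)
          have := hmp.setLIntegral_comp_preimage_emb hemb
            (fun x => ENNReal.ofReal (‖F x‖ ^ 2)) (Set.Ioc ((n : ℝ)) ((n : ℝ) + 1))
          rw [← this]
          congr 1
          rw [Set.preimage_add_const_Ioc]
          simp
      _ = ∫⁻ y in Set.Ioc (0 : ℝ) 1, ∑' n : ℤ, ENNReal.ofReal (‖F (y + n)‖ ^ 2) :=
          (lintegral_tsum (fun n => (hFm.comp (measurable_id.add_const _)).aemeasurable)).symm
      _ = ∫⁻ _ in Set.Ioc (0 : ℝ) 1, ENNReal.ofReal M := by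
          apply setLIntegral_congr_fun_ae measurableSet_Ioc
          apply Filter.Eventually.of_forall
          intro y _
          rw [← ENNReal.ofReal_tsum_of_nonneg (fun n => sq_nonneg _) (hsum y).summable,
            (hsum y).tsum_eq]
      _ = ENNReal.ofReal M := by
          rw [setLIntegral_const]
          simp
  refine ⟨(hFc.norm.pow 2).aestronglyMeasurable, ?_⟩
  rw [HasFiniteIntegral]
  have hnn : ∀ x : ℝ, (‖‖F x‖ ^ 2‖ₑ : ℝ≥0∞) = ENNReal.ofReal (‖F x‖ ^ 2) :=
    fun x => Real.enorm_eq_ofReal (sq_nonneg _)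
  simp_rw [hnn, hlint]
  exact ENNReal.ofReal_lt_top

end PlancherelAux

theorem stmt18 (q : ℕ → ℝ)
    (hq : Set.BijOn q {n : ℕ | 1 ≤ n} (Set.Icc (0:ℝ) 1 ∩ Set.range ((↑) : ℚ → ℝ)))
    (ℓ : ℝ) (hℓ : ℓ ∈ Set.Ioo (0:ℝ) 1)
    (I : ℕ → Set ℝ)
    (hI : ∀ j, I j = Set.Icc (0:ℝ) 1 ∩ Set.Ioo (q j - ℓ / 2 ^ (j + 1)) (q j + ℓ / 2 ^ (j + 1)))
    (A : Set ℝ) (hA : A = ⋃ j ∈ {j : ℕ | 1 ≤ j}, I j)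
    (G : ℝ → ℂ) (hG : G = Set.indicator A (fun _ => (1:ℂ)))
    (F : ℝ → ℂ) (hF : F = FourierTransformInv.fourierInv G) :
    Continuous F ∧ MemLp F 2 (volume : Measure ℝ) ∧
    ∃ L : ℝ, Tendsto (fun R : ℝ => ∫ x in (-R)..R, ‖F x‖ ^ 2) atTop (𝓝 L) := by
  have hAm : MeasurableSet A := by
    rw [hA]
    exact MeasurableSet.biUnion (Set.to_countable _)
      (fun j _ => by rw [hI j]; exact measurableSet_Icc.inter measurableSet_Ioo)
  have hAsub : A ⊆ Set.Icc (0:ℝ) 1 := by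
    rw [hA]
    intro x hx
    simp only [Set.mem_iUnion] at hx
    obtain ⟨j, _, hj⟩ := hx
    rw [hI j] at hj
    exact hj.1
  have hGi : Integrable G volume := by
    rw [hG, integrable_indicator_iff hAm]
    exact integrableOn_const (lt_of_le_of_lt (measure_mono hAsub) (by simp)).ne
  have hFc : Continuous F := by
    rw [hF]
    apply VectorFourier.fourierIntegral_continuous Real.continuous_fourierChar
      (L := -innerₗ ℝ) ?_ hGi
    exact continuous_inner.neg
  set S : Set ℝ := A ∩ Set.Ioc 0 1 with hS
  have hSm : MeasurableSet S := hAm.inter measurableSet_Ioc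
  have hsub : S ⊆ Set.Ioc 0 1 := Set.inter_subset_right
  have hFeq : ∀ w : ℝ, F w = ∫ v in S, (Real.fourierChar (v * w) : ℂ) := by
    intro w
    have e1 : F w = ∫ v : ℝ, (Real.fourierChar (v * w) : ℂ) * G v := by
      rw [hF, Real.fourierInv_eq_fourier_neg, Real.fourier_real_eq]
      simp [Circle.smul_def]
    rw [e1, hG]
    have h1 : ∀ v : ℝ, (Real.fourierChar (v * w) : ℂ) * (Set.indicator A (fun _ => (1:ℂ)) v)
        = Set.indicator A (fun v => (Real.fourierChar (v * w) : ℂ)) v := by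
      intro v
      by_cases hv : v ∈ A <;> simp [Set.indicator_of_mem, Set.indicator_of_notMem, hv]
    simp_rw [h1]
    rw [integral_indicator hAm]
    apply setIntegral_congr_set
    have h2 : (A ∩ Set.Ioc 0 1 : Set ℝ) =ᵐ[volume] (A ∩ Set.Icc 0 1 : Set ℝ) :=
      MeasureTheory.ae_eq_set_inter (Filter.EventuallyEq.refl _ _) Ioc_ae_eq_Icc
    rw [Set.inter_eq_left.mpr hAsub] at h2
    exact h2.symm
  have hint : Integrable (fun x => ‖F x‖ ^ 2) volume :=
    integrable_sq_lemma S hSm hsub F hFc hFeq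
  refine ⟨hFc, (memLp_two_iff_integrable_sq_norm hFc.aestronglyMeasurable).2 hint, ?_⟩
  exact ⟨∫ x, ‖F x‖ ^ 2,
    intervalIntegral_tendsto_integral hint tendsto_neg_atTop_atBot tendsto_id⟩
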